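/- For all integers 0 ≤ k ≤ j, the following identity holds in ℚ(q, a): ∑_{h=k}^{j} (−q)^h a^{2h−j} q^{k² − 2jh + (j−h)²} [h; k]_+ [j; h]_+ · (a² q^{2−2j}; q²)_{j−h} / (q²;q²)_{j−h} = (−q)^k a^{2k−j} q^{−4kj + 2k² + j²} [j; k]_+ · (a² q^{2−4j+2k}; q²)_{j−k} / (q²;q²)_{j−k}. (This is the identity expressing that the reduced north–south closure of a top twist applied to the basis web RI[j,k] in the j-colored HOMFLY-PT skein theory equals the stated closed form.) -/

import Mathlib

noncomputable section

open Finset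

/-- The field `ℚ(q, a)` of rational functions in two variables. -/
abbrev F : Type := FractionRing (MvPolynomial (Fin 2) ℚ)

/-- The variable `q`. -/
def q : F := algebraMap (MvPolynomial (Fin 2) ℚ) F (MvPolynomial.X 0)

/-- The variable `a`. -/
def a : F := algebraMap (MvPolynomial (Fin 2) ℚ) F (MvPolynomial.X 1)

/-- The q-Pochhammer symbol `(x; y)_n = ∏_{j=0}^{n-1} (1 - x yʲ)`. -/
def qPoch (x y : F) (n : ℕ) : F := ∏ i ∈ Finset.range n, (1 - x * y ^ i)

/-- `(q²;q²)_m = ∏_{i=1}^{m} (1 - q^{2i})`. -/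
def qp (m : ℕ) : F := qPoch (q ^ 2) (q ^ 2) m

/-- The positive quantum binomial coefficient `[N; k]₊`. -/
def qbin (N k : ℕ) : F := qp N / (qp k * qp (N - k))

lemma algmap_inj : Function.Injective (algebraMap (MvPolynomial (Fin 2) ℚ) F) :=
  IsFractionRing.injective _ _

lemma q_ne_zero : q ≠ 0 := by
  rw [q, ← map_zero (algebraMap (MvPolynomial (Fin 2) ℚ) F)]
  exact fun h => MvPolynomial.X_ne_zero 0 (algmap_inj h)

lemma a_ne_zero : a ≠ 0 := by
  rw [a, ← map_zero (algebraMap (MvPolynomial (Fin 2) ℚ) F)]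
  exact fun h => MvPolynomial.X_ne_zero 1 (algmap_inj h)

lemma q_pow_ne_one (m : ℕ) (hm : 0 < m) : (q : F) ^ m ≠ 1 := by
  intro h
  rw [q, ← map_pow, ← map_one (algebraMap (MvPolynomial (Fin 2) ℚ) F)] at h
  have h2 := algmap_inj h
  have := congrArg (MvPolynomial.eval (fun _ => (2 : ℚ))) h2
  simp at this
  have : (2:ℚ)^m = 1 := by simpa using this
  have h3 : (1:ℚ) < 2 ^ m := one_lt_pow₀ (by norm_num) hm.ne'
  rw [this] at h3; exact lt_irrefl _ h3

lemma qPoch_zero (x y : F) : qPoch x y 0 = 1 := by simp [qPoch]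

lemma qPoch_succ (x y : F) (n : ℕ) :
    qPoch x y (n + 1) = qPoch x y n * (1 - x * y ^ n) := Finset.prod_range_succ _ _

lemma qp_zero : qp 0 = 1 := qPoch_zero _ _

lemma qp_succ (n : ℕ) : qp (n + 1) = qp n * (1 - q ^ (2 * n + 2)) := by
  rw [qp, qPoch_succ, ← qp, ← pow_mul]
  ring_nf

lemma qp_ne_zero (n : ℕ) : qp n ≠ 0 := by
  induction n with
  | zero => rw [qp_zero]; exact one_ne_zero
  | succ n ih =>
    rw [qp_succ]
    exact mul_ne_zero ih (sub_ne_zero.mpr fun h => q_pow_ne_one (2*n+2) (by omega) h.symm)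

lemma qbin_zero (n : ℕ) : qbin n 0 = 1 := by
  rw [qbin, qp_zero, Nat.sub_zero, one_mul, div_self (qp_ne_zero n)]

lemma qbin_self (n : ℕ) : qbin n n = 1 := by
  rw [qbin, Nat.sub_self, qp_zero, mul_one, div_self (qp_ne_zero n)]

lemma qbin_pascal (n m : ℕ) (h : m < n) :
    qbin (n + 1) (m + 1) = qbin n (m + 1) + q ^ (2 * (n - m)) * qbin n m := by
  obtain ⟨s, rfl⟩ : ∃ s, n = m + 1 + s := ⟨n - m - 1, by omega⟩
  have h1 : m + 1 + s + 1 - (m + 1) = s + 1 := by omega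
  have h2 : m + 1 + s - (m + 1) = s := by omega
  have h3 : m + 1 + s - m = s + 1 := by omega
  rw [qbin, qbin, qbin, h1, h2, h3, qp_succ (m+1+s), qp_succ s, qp_succ m]
  have e1 : (q:F) ^ (2 * (s + 1)) = q ^ (2 * s + 2) := by ring_nf
  rw [e1]
  have key : (q:F) ^ (2 * (m + 1 + s) + 2) = q ^ (2*s+2) * q ^ (2*m+2) := by
    rw [← pow_add]; congr 1; omega
  have hm0 := qp_ne_zero m
  have hs0 := qp_ne_zero s
  have hqm : (1:F) - q^(2*m+2) ≠ 0 :=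
    sub_ne_zero.mpr fun h => q_pow_ne_one (2*m+2) (by omega) h.symm
  have hqs : (1:F) - q^(2*s+2) ≠ 0 :=
    sub_ne_zero.mpr fun h => q_pow_ne_one (2*s+2) (by omega) h.symm
  field_simp
  linear_combination (qp (m+1+s) * qp m * qp s) * key

lemma vdm (x y : F) (n : ℕ) :
    qPoch (x * y) (q ^ 2) n =
      ∑ i ∈ range (n + 1),
        qbin n i * y ^ i * qPoch x (q ^ 2) i * qPoch y (q ^ 2) (n - i) := by
  induction n with
  | zero => simp [qPoch_zero, qbin_self]
  | succ n ih =>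
    have hsplit :
        (∑ i ∈ range (n + 2),
            qbin (n+1) i * y ^ i * qPoch x (q^2) i * qPoch y (q^2) (n + 1 - i)) =
        (∑ i ∈ range (n + 1),
            qbin n i * y ^ i * qPoch x (q^2) i * qPoch y (q^2) (n + 1 - i)) +
        (∑ m ∈ range (n + 1),
            q ^ (2 * (n - m)) * qbin n m * y ^ (m+1) * qPoch x (q^2) (m+1) *
              qPoch y (q^2) (n - m)) := by
      rw [Finset.sum_range_succ' _ (n+1), Finset.sum_range_succ' (fun i => qbin n i * y ^ i * qPoch x (q^2) i * qPoch y (q^2) (n + 1 - i)) n]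
      rw [Finset.sum_range_succ (fun m => qbin (n+1) (m+1) * y ^ (m+1) * qPoch x (q^2) (m+1) * qPoch y (q^2) (n + 1 - (m+1)))]
      rw [Finset.sum_range_succ (fun m => q ^ (2 * (n - m)) * qbin n m * y ^ (m+1) * qPoch x (q^2) (m+1) * qPoch y (q^2) (n - m))]
      have htop : qbin (n+1) (n+1) * y ^ (n+1) * qPoch x (q^2) (n+1) * qPoch y (q^2) (n + 1 - (n+1)) =
          q ^ (2 * (n - n)) * qbin n n * y ^ (n+1) * qPoch x (q^2) (n+1) * qPoch y (q^2) (n - n) := by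
        simp [qbin_self]
      have hzero : qbin (n+1) 0 * y ^ 0 * qPoch x (q^2) 0 * qPoch y (q^2) (n + 1 - 0) =
          qbin n 0 * y ^ 0 * qPoch x (q^2) 0 * qPoch y (q^2) (n + 1 - 0) := by
        simp [qbin_zero]
      have hmid : ∀ m ∈ range n,
          qbin (n+1) (m+1) * y ^ (m+1) * qPoch x (q^2) (m+1) * qPoch y (q^2) (n + 1 - (m+1)) =
          qbin n (m+1) * y ^ (m+1) * qPoch x (q^2) (m+1) * qPoch y (q^2) (n + 1 - (m+1)) +
          q ^ (2 * (n - m)) * qbin n m * y ^ (m+1) * qPoch x (q^2) (m+1) * qPoch y (q^2) (n - m) := by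
        intro m hm
        rw [Finset.mem_range] at hm
        have h1 : n + 1 - (m + 1) = n - m := by omega
        rw [h1, qbin_pascal n m hm]
        ring
      rw [Finset.sum_congr rfl hmid, Finset.sum_add_distrib]
      rw [htop, hzero]
      ring
    rw [qPoch_succ, ih, hsplit]
    have hA : ∀ i ∈ range (n+1),
        qbin n i * y ^ i * qPoch x (q^2) i * qPoch y (q^2) (n + 1 - i) =
        qbin n i * y ^ i * qPoch x (q^2) i *
          (qPoch y (q^2) (n - i) * (1 - y * (q^2) ^ (n - i))) := by
      intro i hi
      rw [Finset.mem_range] at hi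
      have h1 : n + 1 - i = (n - i) + 1 := by omega
      rw [h1, qPoch_succ]
    rw [Finset.sum_congr rfl hA]
    have hB : ∀ m ∈ range (n+1),
        q ^ (2 * (n - m)) * qbin n m * y ^ (m+1) * qPoch x (q^2) (m+1) *
          qPoch y (q^2) (n - m) =
        q ^ (2 * (n - m)) * qbin n m * y ^ (m+1) *
          (qPoch x (q^2) m * (1 - x * (q^2) ^ m)) * qPoch y (q^2) (n - m) := by
      intro m hm
      rw [qPoch_succ]
    rw [Finset.sum_congr rfl hB, Finset.sum_mul, ← Finset.sum_add_distrib]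
    apply Finset.sum_congr rfl
    intro i hi
    rw [Finset.mem_range] at hi
    have key : (q:F) ^ (2 * (n - i)) * (q^2) ^ i = (q^2) ^ n := by
      rw [← pow_mul, ← pow_add, ← pow_mul]
      congr 1
      omega
    have key2 : ((q:F)^2) ^ (n - i) = q ^ (2 * (n - i)) := by rw [← pow_mul]
    rw [key2]
    linear_combination (qbin n i * y ^ (i+1) * qPoch x (q^2) i * qPoch y (q^2) (n - i) * x) * key

lemma one_sub_qpow_flip (m : ℤ) : (1:F) - q ^ m = -(q ^ m) * (1 - q ^ (-m)) := by
  have h : (q:F) ^ m * q ^ (-m) = 1 := by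
    rw [← zpow_add₀ q_ne_zero]; simp
  linear_combination -h

lemma qPoch_negpow (n i : ℕ) (h : i ≤ n) :
    qp (n - i) * qPoch ((q : F) ^ (-(2 * (n:ℤ)))) (q ^ 2) i =
      (-1) ^ i * q ^ ((i:ℤ) * ((i:ℤ) - 1) - 2 * (n:ℤ) * (i:ℤ)) * qp n := by
  induction i with
  | zero => simp [qPoch_zero]
  | succ i ih =>
    have hin : i ≤ n := by omega
    have ih' := ih hin
    have hfac : (1:F) - q ^ (2 * ((n:ℤ) - (i:ℤ))) ≠ 0 := by
      have hcc : (2 * ((n:ℤ) - (i:ℤ))) = ((2 * (n - i) : ℕ) : ℤ) := by push_cast; omega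
      rw [hcc, zpow_natCast]
      exact sub_ne_zero.mpr fun hq => q_pow_ne_one (2*(n-i)) (by omega) hq.symm
    apply mul_left_cancel₀ hfac
    push_cast
    have hq1 : ((1:F) - q ^ (2 * ((n:ℤ) - (i:ℤ)))) = ((1:F) - q ^ (2 * (n - i)) : F) := by
      congr 1
      have hcc : (2 * ((n:ℤ) - (i:ℤ))) = ((2 * (n - i) : ℕ) : ℤ) := by push_cast; omega
      rw [hcc, zpow_natCast]
    have hqp : qp (n - i) = qp (n - (i+1)) * (1 - q ^ (2 * (n - i))) := by
      have hni : n - i = (n - (i+1)) + 1 := by omega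
      have h2 : 2 * (n - (i+1)) + 2 = 2 * (n - i) := by omega
      conv_lhs => rw [hni]
      rw [qp_succ, h2]
    rw [qPoch_succ]
    have hx : (q:F) ^ (-(2 * (n:ℤ))) * (q ^ 2) ^ i = q ^ (2 * (i:ℤ) - 2 * (n:ℤ)) := by
      rw [← pow_mul, ← zpow_natCast (q:F) (2 * i), ← zpow_add₀ q_ne_zero]
      congr 1
      push_cast
      ring
    rw [hx]
    have he : -(2 * (i:ℤ) - 2 * (n:ℤ)) = 2 * ((n:ℤ) - (i:ℤ)) := by ring
    have hflip : (1:F) - q ^ (2 * (i:ℤ) - 2 * (n:ℤ)) =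
        -(q ^ (2 * (i:ℤ) - 2 * (n:ℤ))) * (1 - q ^ (2 * ((n:ℤ) - (i:ℤ)))) := by
      rw [one_sub_qpow_flip, he]
    have key : (q:F) ^ ((i:ℤ) * ((i:ℤ) - 1) - 2 * (n:ℤ) * (i:ℤ)) * q ^ (2 * (i:ℤ) - 2 * (n:ℤ)) =
        q ^ (((i:ℤ) + 1) * (((i:ℤ) + 1) - 1) - 2 * (n:ℤ) * ((i:ℤ) + 1)) := by
      rw [← zpow_add₀ q_ne_zero]
      congr 1
      ring
    calc (1 - q ^ (2 * ((n:ℤ) - (i:ℤ)))) *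
          (qp (n - (i+1)) * (qPoch ((q:F) ^ (-(2 * (n:ℤ)))) (q ^ 2) i *
            (1 - q ^ (2 * (i:ℤ) - 2 * (n:ℤ)))))
        = (qp (n - i) * qPoch ((q:F) ^ (-(2 * (n:ℤ)))) (q ^ 2) i) *
            (1 - q ^ (2 * (i:ℤ) - 2 * (n:ℤ))) := by
          rw [hqp, ← hq1]; ring
      _ = ((-1) ^ i * q ^ ((i:ℤ) * ((i:ℤ) - 1) - 2 * (n:ℤ) * (i:ℤ)) * qp n) *
            (-(q ^ (2 * (i:ℤ) - 2 * (n:ℤ))) * (1 - q ^ (2 * ((n:ℤ) - (i:ℤ))))) := by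
          rw [ih', hflip]
      _ = (1 - q ^ (2 * ((n:ℤ) - (i:ℤ)))) *
            ((-1) ^ (i+1) * q ^ (((i:ℤ) + 1) * (((i:ℤ) + 1) - 1) - 2 * (n:ℤ) * ((i:ℤ) + 1)) * qp n) := by
          linear_combination ((-1) ^ (i+1) * qp n * (1 - q ^ (2 * ((n:ℤ) - (i:ℤ))))) * key

lemma cast_tri (i : ℕ) : ((i * (i - 1) : ℕ) : ℤ) = (i:ℤ) * ((i:ℤ) - 1) := by
  cases i with
  | zero => simp
  | succ m => push_cast [Nat.succ_sub_one]; ring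

lemma key_pow (b : F) (n i : ℕ) :
    (b * q ^ (2*n)) ^ i * ((-1) ^ i * q ^ ((i:ℤ) * ((i:ℤ) - 1) - 2 * (n:ℤ) * (i:ℤ))) =
      (-b) ^ i * q ^ (i * (i - 1)) := by
  rw [mul_pow, neg_pow, ← pow_mul, ← zpow_natCast (q:F) (2*n*i),
    ← zpow_natCast (q:F) (i*(i-1))]
  have : (q:F) ^ ((2*n*i : ℕ) : ℤ) * q ^ ((i:ℤ) * ((i:ℤ) - 1) - 2 * (n:ℤ) * (i:ℤ)) =
      q ^ (((i * (i-1) : ℕ)) : ℤ) := by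
    rw [← zpow_add₀ q_ne_zero, cast_tri]
    congr 1
    push_cast
    ring
  linear_combination (b ^ i * (-1)^i) * this

lemma reduced (b : F) (n : ℕ) :
    ∑ i ∈ range (n + 1),
        qbin n i * (-b) ^ i * q ^ (i * (i - 1)) *
          (qPoch (b * q ^ (2 * n)) (q ^ 2) (n - i) / qp (n - i)) =
      qPoch b (q ^ 2) n / qp n := by
  have hxy : (q:F) ^ (-(2 * (n:ℤ))) * (b * q ^ (2 * n)) = b := by
    have h1 : (q:F) ^ (-(2 * (n:ℤ))) * q ^ ((2*n : ℕ) : ℤ) = 1 := by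
      rw [← zpow_add₀ q_ne_zero]
      have : -(2 * (n:ℤ)) + ((2*n : ℕ) : ℤ) = 0 := by push_cast; ring
      rw [this, zpow_zero]
    rw [← zpow_natCast (q:F) (2*n)]
    calc (q:F) ^ (-(2 * (n:ℤ))) * (b * q ^ ((2*n:ℕ):ℤ)) =
        b * ((q:F) ^ (-(2 * (n:ℤ))) * q ^ ((2*n:ℕ):ℤ)) := by ring
      _ = b := by rw [h1, mul_one]
  have hv := vdm ((q:F) ^ (-(2 * (n:ℤ)))) (b * q ^ (2 * n)) n
  rw [hxy] at hv
  rw [hv, Finset.sum_div]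
  apply Finset.sum_congr rfl
  intro i hi
  rw [Finset.mem_range] at hi
  have hi' : i ≤ n := by omega
  have hneg : qPoch ((q:F) ^ (-(2 * (n:ℤ)))) (q ^ 2) i =
      ((-1) ^ i * q ^ ((i:ℤ) * ((i:ℤ) - 1) - 2 * (n:ℤ) * (i:ℤ)) * qp n) / qp (n - i) := by
    rw [eq_div_iff (qp_ne_zero (n - i))]
    linear_combination qPoch_negpow n i hi'
  rw [hneg]
  have hk := key_pow b n i
  have h1 := qp_ne_zero (n - i)
  have h2 := qp_ne_zero n
  field_simp
  linear_combination (-(qbin n i * qPoch (b * q ^ (2*n)) (q^2) (n - i))) * hk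

lemma qbin_mul (k n i : ℕ) (hi : i ≤ n) :
    qbin (k + i) k * qbin (k + n) (k + i) = qbin (k + n) k * qbin n i := by
  rw [qbin, qbin, qbin, qbin]
  have h1 : k + i - k = i := by omega
  have h2 : k + n - (k + i) = n - i := by omega
  have h3 : k + n - k = n := by omega
  rw [h1, h2, h3]
  have u1 := qp_ne_zero k
  have u2 := qp_ne_zero i
  have u3 := qp_ne_zero (n - i)
  have u4 := qp_ne_zero (k + i)
  have u5 := qp_ne_zero (k + n)
  have u6 := qp_ne_zero n
  field_simp

/-- The reduced north–south closure of a top twist on `RI[j,k]` (Lemma `lemmaclosure2`):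
`∑_{h=k}^{j} (−q)^h a^{2h−j} q^{k²−2jh+(j−h)²} [h;k]₊ [j;h]₊ (a²q^{2−2j};q²)_{j−h}/(q²;q²)_{j−h}
 = (−q)^k a^{2k−j} q^{−4kj+2k²+j²} [j;k]₊ (a²q^{2−4j+2k};q²)_{j−k}/(q²;q²)_{j−k}`. -/
theorem closure_TRI (j k : ℕ) (hk : k ≤ j) :
    ∑ h ∈ Finset.Icc k j,
      (-q) ^ h * a ^ (2 * (h : ℤ) - (j : ℤ)) *
        q ^ ((k : ℤ) ^ 2 - 2 * (j : ℤ) * (h : ℤ) + ((j : ℤ) - (h : ℤ)) ^ 2) *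
        qbin h k * qbin j h *
        (qPoch (a ^ 2 * q ^ (2 - 2 * (j : ℤ))) (q ^ 2) (j - h) / qp (j - h)) =
      (-q) ^ k * a ^ (2 * (k : ℤ) - (j : ℤ)) *
        q ^ (-4 * (k : ℤ) * (j : ℤ) + 2 * (k : ℤ) ^ 2 + (j : ℤ) ^ 2) * qbin j k *
        (qPoch (a ^ 2 * q ^ (2 - 4 * (j : ℤ) + 2 * (k : ℤ))) (q ^ 2) (j - k) / qp (j - k)) := by
  obtain ⟨n, rfl⟩ : ∃ n, j = k + n := ⟨j - k, by omega⟩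
  -- reindex the sum
  rw [← Finset.Ico_add_one_right_eq_Icc, Finset.sum_Ico_eq_sum_range]
  have hrange : k + n + 1 - k = n + 1 := by omega
  rw [hrange]
  -- the Pochhammer base on the LHS equals b * q^(2n)
  have hbase : (a ^ 2 * q ^ (2 - 4 * ((k + n : ℕ) : ℤ) + 2 * (k : ℤ))) * q ^ (2 * n) =
      a ^ 2 * q ^ (2 - 2 * ((k + n : ℕ) : ℤ)) := by
    rw [← zpow_natCast (q : F) (2 * n), mul_assoc, ← zpow_add₀ q_ne_zero]
    congr 1
    push_cast
    ring
  have hnk : k + n - k = n := by omega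
  rw [hnk, ← hbase, ← reduced (a ^ 2 * q ^ (2 - 4 * ((k + n : ℕ) : ℤ) + 2 * (k : ℤ))) n,
    Finset.mul_sum]
  apply Finset.sum_congr rfl
  intro i hi
  rw [Finset.mem_range] at hi
  have hi' : i ≤ n := by omega
  have hsub : k + n - (k + i) = n - i := by omega
  rw [hsub]
  -- now termwise scalar manipulation
  have e1 : (-q : F) ^ (k + i) = (-q) ^ k * ((-1) ^ i * q ^ ((i : ℤ))) := by
    rw [pow_add, zpow_natCast]
    congr 1
    exact neg_pow q i
  have e2 : a ^ (2 * ((k + i : ℕ) : ℤ) - ((k + n : ℕ) : ℤ)) =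
      a ^ (2 * (k : ℤ) - ((k + n : ℕ) : ℤ)) * a ^ (2 * (i : ℤ)) := by
    rw [← zpow_add₀ a_ne_zero]
    congr 1
    push_cast
    ring
  have e3 : (-(a ^ 2 * q ^ (2 - 4 * ((k + n : ℕ) : ℤ) + 2 * (k : ℤ)))) ^ i =
      (-1) ^ i * a ^ (2 * (i : ℤ)) *
        q ^ ((2 - 4 * ((k + n : ℕ) : ℤ) + 2 * (k : ℤ)) * (i : ℤ)) := by
    rw [neg_pow, mul_pow, ← pow_mul, ← zpow_natCast a (2 * i),
      ← zpow_natCast ((q : F) ^ (2 - 4 * ((k + n : ℕ) : ℤ) + 2 * (k : ℤ))) i, ← zpow_mul]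
    push_cast
    ring
  have e4 : (q : F) ^ (i * (i - 1)) = q ^ ((i : ℤ) * ((i : ℤ) - 1)) := by
    rw [← zpow_natCast (q : F) (i * (i - 1)), cast_tri]
  have hq : (q : F) ^ ((i : ℤ)) *
        q ^ ((k : ℤ) ^ 2 - 2 * ((k + n : ℕ) : ℤ) * ((k + i : ℕ) : ℤ) +
          (((k + n : ℕ) : ℤ) - ((k + i : ℕ) : ℤ)) ^ 2) =
      q ^ (-4 * (k : ℤ) * ((k + n : ℕ) : ℤ) + 2 * (k : ℤ) ^ 2 + ((k + n : ℕ) : ℤ) ^ 2) *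
        q ^ ((2 - 4 * ((k + n : ℕ) : ℤ) + 2 * (k : ℤ)) * (i : ℤ)) *
        q ^ ((i : ℤ) * ((i : ℤ) - 1)) := by
    rw [← zpow_add₀ q_ne_zero, ← zpow_add₀ q_ne_zero, ← zpow_add₀ q_ne_zero]
    congr 1
    push_cast
    ring
  have hG := qbin_mul k n i hi'
  rw [e1, e2, e3, e4]
  linear_combination
    (((-q) ^ k * (-1) ^ i * a ^ (2 * (k : ℤ) - ((k + n : ℕ) : ℤ)) * a ^ (2 * (i : ℤ)) *
        (qPoch ((a ^ 2 * q ^ (2 - 4 * ((k + n : ℕ) : ℤ) + 2 * (k : ℤ))) * q ^ (2 * n))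
          (q ^ 2) (n - i) / qp (n - i))) * q ^ ((i : ℤ)) *
      q ^ ((k : ℤ) ^ 2 - 2 * ((k + n : ℕ) : ℤ) * ((k + i : ℕ) : ℤ) +
          (((k + n : ℕ) : ℤ) - ((k + i : ℕ) : ℤ)) ^ 2)) * hG +
    (((-q) ^ k * (-1) ^ i * a ^ (2 * (k : ℤ) - ((k + n : ℕ) : ℤ)) * a ^ (2 * (i : ℤ)) *
        (qPoch ((a ^ 2 * q ^ (2 - 4 * ((k + n : ℕ) : ℤ) + 2 * (k : ℤ))) * q ^ (2 * n))
          (q ^ 2) (n - i) / qp (n - i))) * qbin (k + n) k * qbin n i) * hq
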